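/- arXiv:1409.3439 — 3 statements merged into one kernel-verified Lean document; each statement's English description precedes it below -/
import Mathlib

section
/- Let α be a quadratic irrational real number and let c_α ∈ (0,1) be a Markov constant of α, i.e. inf_{q≥1} q·‖qα‖ ≥ c_α. Then for every integer t ≥ 2, all partial quotients of the regular continued fraction expansion of tα are bounded above by t/c_α. -/
/-- The distance from a real number to the nearest integer, `‖x‖`. -/
noncomputable def distNearestInt (x : ℝ) : ℝ := |x - round x|

/-- A quadratic irrational: an irrational real root of a quadratic polynomial
with integer coefficients. -/
def IsQuadraticIrrational (α : ℝ) : Prop :=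
  Irrational α ∧ ∃ a b c : ℤ, a ≠ 0 ∧ (a : ℝ) * α ^ 2 + (b : ℝ) * α + (c : ℝ) = 0

/-- The iterates `x_0 = x`, `x_{k+1} = 1/{x_k}` of the continued fraction algorithm. -/
noncomputable def cfIter (x : ℝ) : ℕ → ℝ
  | 0 => x
  | n + 1 => (Int.fract (cfIter x n))⁻¹

/-- The `n`-th partial quotient `a_n` of the regular continued fraction
expansion of `x`: `a_n = ⌊x_n⌋`. -/
noncomputable def cfPQ (x : ℝ) (n : ℕ) : ℤ := ⌊cfIter x n⌋

/-- The denominator `r_k` of the `k`-th convergent of the regular continued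
fraction expansion of `x` : `r_0 = 1`, `r_1 = a_1`, `r_k = a_k r_{k-1} + r_{k-2}`. -/
noncomputable def convDen (x : ℝ) : ℕ → ℤ
  | 0 => 1
  | 1 => cfPQ x 1
  | n + 2 => cfPQ x (n + 2) * convDen x (n + 1) + convDen x n

/-- `l` is an eventual period of the sequence `a`. -/
def IsEventualPeriodOf (a : ℕ → ℤ) (l : ℕ) : Prop :=
  0 < l ∧ ∃ N, ∀ k, N ≤ k → a (k + l) = a k

/-- The minimal period length `l` of the (eventually periodic) sequence of
partial quotients of `x`. -/
noncomputable def cfMinPeriod (x : ℝ) : ℕ :=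
  sInf {l | IsEventualPeriodOf (cfPQ x) l}

/-- The minimal preperiod length: the least index from which the sequence of
partial quotients of `x` is periodic with the minimal period. -/
noncomputable def cfMinPreperiod (x : ℝ) : ℕ :=
  sInf {N | ∀ k, N ≤ k → cfPQ x (k + cfMinPeriod x) = cfPQ x k}

/-- The last partial quotient of the (minimal) period of the continued
fraction expansion of `x`. -/
noncomputable def cfLastPQ (x : ℝ) : ℤ :=
  cfPQ x (cfMinPreperiod x + cfMinPeriod x - 1)

/-- The pseudo-absolute value `|q|_D = inf {1/u_n : u_n ∣ q}` attached to the
pseudo-absolute value sequence `D = (u_n)_{n ≥ 1}`. -/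
noncomputable def pseudoAbs (u : ℕ → ℕ) (q : ℕ) : ℝ :=
  sInf {x : ℝ | ∃ n, 1 ≤ n ∧ u n ∣ q ∧ x = 1 / (u n : ℝ)}
section Aux

/-- shifted denominators: `Dq n = q_{n-1}` with `q_{-1} = 0`. -/
noncomputable def Dq (x : ℝ) : ℕ → ℤ
  | 0 => 0
  | n + 1 => convDen x n

/-- numerators of the convergents. -/
noncomputable def pNum (x : ℝ) : ℕ → ℤ
  | 0 => cfPQ x 0
  | 1 => cfPQ x 1 * cfPQ x 0 + 1
  | n + 2 => cfPQ x (n + 2) * pNum x (n + 1) + pNum x n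

/-- shifted numerators: `Pp n = p_{n-1}` with `p_{-1} = 1`. -/
noncomputable def Pp (x : ℝ) : ℕ → ℤ
  | 0 => 1
  | n + 1 => pNum x n

lemma convDen_rec (x : ℝ) (n : ℕ) :
    convDen x (n + 1) = cfPQ x (n + 1) * convDen x n + Dq x n := by
  cases n with
  | zero => simp [convDen, Dq]
  | succ m => rfl

lemma pNum_rec (x : ℝ) (n : ℕ) :
    pNum x (n + 1) = cfPQ x (n + 1) * pNum x n + Pp x n := by
  cases n with
  | zero => simp [pNum, Pp]
  | succ m => rfl

lemma irr_iter {x : ℝ} (hx : Irrational x) : ∀ n, Irrational (cfIter x n) := by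
  intro n
  induction n with
  | zero => exact hx
  | succ m ih =>
    have : Irrational (Int.fract (cfIter x m)) := by
      rw [Int.fract]; exact ih.sub_intCast _
    exact this.inv

lemma fract_pos {x : ℝ} (hx : Irrational x) (n : ℕ) : 0 < Int.fract (cfIter x n) :=
  lt_of_le_of_ne (Int.fract_nonneg _) (fun h => ((irr_iter hx n).sub_intCast ⌊cfIter x n⌋).ne_int 0 (by rw [Int.fract] at h; simpa using h.symm))

lemma iter_gt_one {x : ℝ} (hx : Irrational x) (n : ℕ) : 1 < cfIter x (n + 1) := by
  show 1 < (Int.fract (cfIter x n))⁻¹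
  exact (one_lt_inv₀ (fract_pos hx n)).mpr (Int.fract_lt_one _)

lemma pq_ge_one {x : ℝ} (hx : Irrational x) (n : ℕ) : 1 ≤ cfPQ x (n + 1) :=
  Int.le_floor.mpr (by exact_mod_cast (iter_gt_one hx n).le)

lemma convDen_ge_one {x : ℝ} (hx : Irrational x) : ∀ n, 1 ≤ convDen x n := by
  have key : ∀ n, 1 ≤ convDen x n ∧ 0 ≤ Dq x n := by
    intro n
    induction n with
    | zero => exact ⟨le_refl _, le_refl _⟩
    | succ m ih =>
      refine ⟨?_, by simpa [Dq] using zero_le_one.trans ih.1⟩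
      rw [convDen_rec]
      nlinarith [pq_ge_one hx m, ih.1, ih.2]
  exact fun n => (key n).1

lemma Dq_nonneg {x : ℝ} (hx : Irrational x) (n : ℕ) : 0 ≤ Dq x n := by
  cases n with
  | zero => simp [Dq]
  | succ m => exact le_trans zero_le_one (by simpa [Dq] using convDen_ge_one hx m)

end Aux

section Main

lemma cfIter_succ_eq {x : ℝ} (hx : Irrational x) (n : ℕ) :
    cfIter x n = cfPQ x n + (cfIter x (n + 1))⁻¹ := by
  have h1 : cfIter x (n + 1) = (Int.fract (cfIter x n))⁻¹ := rfl
  have h2 : Int.fract (cfIter x n) = cfIter x n - ⌊cfIter x n⌋ := rfl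
  rw [h1, inv_inv, cfPQ, h2]
  ring

lemma iter_ne_zero {x : ℝ} (hx : Irrational x) (n : ℕ) : cfIter x (n + 1) ≠ 0 :=
  ne_of_gt (lt_trans zero_lt_one (iter_gt_one hx n))

/-- The key identity `x (x_{n+1} q_n + q_{n-1}) = x_{n+1} p_n + p_{n-1}`. -/
lemma main_identity {x : ℝ} (hx : Irrational x) (n : ℕ) :
    x * (cfIter x (n + 1) * (convDen x n : ℝ) + (Dq x n : ℝ)) =
      cfIter x (n + 1) * (pNum x n : ℝ) + (Pp x n : ℝ) := by
  induction n with
  | zero =>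
    have h := cfIter_succ_eq hx 0
    have hz : cfIter x 1 ≠ 0 := iter_ne_zero hx 0
    have hx0 : cfIter x 0 = x := rfl
    rw [hx0] at h
    field_simp at h
    simp only [convDen, Dq, pNum, Pp, Int.cast_one, Int.cast_zero]
    linear_combination h
  | succ m ih =>
    have h := cfIter_succ_eq hx (m + 1)
    have hz : cfIter x (m + 2) ≠ 0 := iter_ne_zero hx (m + 1)
    have hfe : cfIter x (m+1) * cfIter x (m+2) = (cfPQ x (m+1) : ℝ) * cfIter x (m+2) + 1 := by
      rw [h]; field_simp
    rw [convDen_rec, pNum_rec]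
    have hD : (Dq x (m+1) : ℝ) = (convDen x m : ℝ) := by simp [Dq]
    have hP : (Pp x (m+1) : ℝ) = (pNum x m : ℝ) := by simp [Pp]
    push_cast
    rw [hD, hP]
    linear_combination cfIter x (m+2) * ih - (x * (convDen x m : ℝ) - (pNum x m : ℝ)) * hfe

lemma det_identity (x : ℝ) (n : ℕ) :
    convDen x n * Pp x n - pNum x n * Dq x n = (-1) ^ n := by
  induction n with
  | zero => simp [convDen, Pp, pNum, Dq]
  | succ m ih =>
    rw [convDen_rec, pNum_rec]
    have hD : Dq x (m+1) = convDen x m := rfl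
    have hP : Pp x (m+1) = pNum x m := rfl
    rw [hD, hP, pow_succ]
    linarith [ih, mul_comm (cfPQ x (m+1)) (convDen x m)]

lemma err_abs {x : ℝ} (hx : Irrational x) (n : ℕ) :
    |(convDen x n : ℝ) * x - (pNum x n : ℝ)| *
      (cfIter x (n + 1) * (convDen x n : ℝ) + (Dq x n : ℝ)) = 1 := by
  set S : ℝ := cfIter x (n + 1) * (convDen x n : ℝ) + (Dq x n : ℝ) with hS
  have hq : (1 : ℝ) ≤ (convDen x n : ℝ) := by exact_mod_cast convDen_ge_one hx n
  have hDn : (0 : ℝ) ≤ (Dq x n : ℝ) := by exact_mod_cast Dq_nonneg hx n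
  have hSpos : 0 < S := by
    have := iter_gt_one hx n
    nlinarith
  have hdet : (convDen x n : ℝ) * (Pp x n : ℝ) - (pNum x n : ℝ) * (Dq x n : ℝ) = (-1) ^ n := by
    have := det_identity x n
    exact_mod_cast congrArg (fun z : ℤ => (z : ℝ)) this
  have key : ((convDen x n : ℝ) * x - (pNum x n : ℝ)) * S = (-1) ^ n := by
    have hM := main_identity hx n
    rw [hS]
    nlinarith [hM, hdet]
  have : |(convDen x n : ℝ) * x - (pNum x n : ℝ)| * S = |((convDen x n : ℝ) * x - (pNum x n : ℝ)) * S| := by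
    rw [abs_mul, abs_of_pos hSpos]
  rw [this, key]
  simp [abs_pow]

/-- `round` gives the nearest integer. -/
lemma distNearestInt_le (y : ℝ) (m : ℤ) : distNearestInt y ≤ |y - (m : ℝ)| := by
  rw [distNearestInt, abs_sub_round_eq_min]
  rcases le_or_gt (m : ℝ) y with h | h
  · rcases le_or_gt ((m : ℝ)) (⌊y⌋ : ℝ) with h2 | h2
    · refine min_le_of_left_le ?_
      rw [abs_of_nonneg (by linarith)]
      have hf : Int.fract y = y - ⌊y⌋ := rfl
      linarith
    · have : (⌊y⌋ : ℝ) + 1 ≤ (m : ℝ) := by exact_mod_cast Int.add_one_le_of_lt (by exact_mod_cast h2)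
      have hle : y < (m : ℝ) := by
        have := Int.lt_floor_add_one y
        linarith
      linarith [abs_nonneg (y - (m:ℝ))]
  · refine min_le_of_right_le ?_
    have : (⌊y⌋ : ℝ) + 1 ≤ (m : ℝ) := by
      have : ⌊y⌋ < m := Int.floor_lt.mpr h
      exact_mod_cast Int.add_one_le_of_lt this
    rw [abs_of_neg (by linarith)]
    have hf : Int.fract y = y - ⌊y⌋ := rfl
    linarith

end Main

/-- Lemma 1 (i): for a quadratic irrational `α` with Markov constant
`c_α ∈ (0,1)` and any integer `t ≥ 2`, the partial quotients of `tα` are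
bounded above by `t / c_α`. -/
theorem partial_quotients_bounded (α : ℝ) (hα : IsQuadraticIrrational α)
    (cα : ℝ) (hcα : cα ∈ Set.Ioo (0 : ℝ) 1)
    (hMarkov : ∀ q : ℕ, 1 ≤ q → cα ≤ (q : ℝ) * distNearestInt ((q : ℝ) * α)) :
    ∀ t : ℕ, 2 ≤ t → ∀ k : ℕ, 1 ≤ k →
      (cfPQ ((t : ℝ) * α) k : ℝ) ≤ (t : ℝ) / cα := by
  intro t ht k hk
  set x : ℝ := (t : ℝ) * α with hxdef
  have hx : Irrational x := by
    have := hα.1.natCast_mul (show t ≠ 0 by omega)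
    simpa [hxdef] using this
  obtain ⟨n, rfl⟩ : ∃ n, k = n + 1 := ⟨k - 1, by omega⟩
  have hc : 0 < cα := hcα.1
  have hq : (1 : ℝ) ≤ (convDen x n : ℝ) := by exact_mod_cast convDen_ge_one hx n
  have hd : (0 : ℝ) ≤ (Dq x n : ℝ) := by exact_mod_cast Dq_nonneg hx n
  have hz : 1 < cfIter x (n + 1) := iter_gt_one hx n
  have herr := err_abs hx n
  set E := |(convDen x n : ℝ) * x - (pNum x n : ℝ)| with hE
  set S := cfIter x (n + 1) * (convDen x n : ℝ) + (Dq x n : ℝ) with hSdef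
  have hSpos : 0 < S := by rw [hSdef]; nlinarith
  -- apply the Markov hypothesis with q = t * q_n
  have htn : 1 ≤ (convDen x n).toNat := by
    have := convDen_ge_one hx n; omega
  have hQ1 : 1 ≤ t * (convDen x n).toNat := by
    have := Nat.mul_le_mul (show 1 ≤ t by omega) htn
    simpa using this
  have hQcast : ((t * (convDen x n).toNat : ℕ) : ℝ) = (t : ℝ) * (convDen x n : ℝ) := by
    have h0 : (0 : ℤ) ≤ convDen x n := zero_le_one.trans (convDen_ge_one hx n)
    have h1 : ((convDen x n).toNat : ℤ) = convDen x n := Int.toNat_of_nonneg h0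
    calc ((t * (convDen x n).toNat : ℕ) : ℝ) = (t : ℝ) * (((convDen x n).toNat : ℤ) : ℝ) := by
          push_cast; ring
    _ = (t : ℝ) * (convDen x n : ℝ) := by rw [h1]
  have hMk := hMarkov (t * (convDen x n).toNat) hQ1
  rw [hQcast] at hMk
  have hy : (t : ℝ) * (convDen x n : ℝ) * α = (convDen x n : ℝ) * x := by
    rw [hxdef]; ring
  rw [hy] at hMk
  have hdist : distNearestInt ((convDen x n : ℝ) * x) ≤ E := by
    rw [hE]
    simpa using distNearestInt_le ((convDen x n : ℝ) * x) (pNum x n)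
  have ht2 : (2 : ℝ) ≤ (t : ℝ) := by exact_mod_cast ht
  have hcE : cα ≤ (t : ℝ) * (convDen x n : ℝ) * E := by
    calc cα ≤ (t : ℝ) * (convDen x n : ℝ) * distNearestInt ((convDen x n : ℝ) * x) := hMk
    _ ≤ (t : ℝ) * (convDen x n : ℝ) * E := by
        apply mul_le_mul_of_nonneg_left hdist
        nlinarith
  have h1 : cα * S ≤ (t : ℝ) * (convDen x n : ℝ) := by
    calc cα * S ≤ ((t : ℝ) * (convDen x n : ℝ) * E) * S :=
          mul_le_mul_of_nonneg_right hcE hSpos.le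
    _ = (t : ℝ) * (convDen x n : ℝ) * (E * S) := by ring
    _ = (t : ℝ) * (convDen x n : ℝ) := by rw [herr]; ring
  have h2 : cfIter x (n + 1) * (convDen x n : ℝ) ≤ S := by
    rw [hSdef]; linarith
  have h3 : cα * cfIter x (n + 1) ≤ (t : ℝ) := by
    by_contra hcon
    push_neg at hcon
    have hq0 : (0 : ℝ) < (convDen x n : ℝ) := by linarith
    nlinarith [mul_le_mul_of_nonneg_left h2 hc.le]
  have hfl : (cfPQ x (n + 1) : ℝ) ≤ cfIter x (n + 1) := Int.floor_le _
  rw [le_div_iff₀ hc]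
  nlinarith [mul_le_mul_of_nonneg_right hfl hc.le]
end

section
/- For every quadratic irrational real number α and every pseudo-absolute value sequence D = (u_n)_{n≥1}, one has inf_{q≥1} q · ‖qα‖ · |q|_D = 0, where the infimum is over all positive integers q. In other words, the Mixed Littlewood Conjecture holds for all quadratic irrationals. -/
def PQ (x y D : ℤ) : ℕ → ℤ × ℤ
  | 0 => (1, 0)
  | m + 1 =>
    ((PQ x y D m).1 * x + D * y * (PQ x y D m).2,
     (PQ x y D m).1 * y + x * (PQ x y D m).2)

lemma PQ_spec (x y D : ℤ) (θ : ℝ) (hθ : θ ^ 2 = (D : ℝ)) (m : ℕ) :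
    ((PQ x y D m).1 : ℝ) + ((PQ x y D m).2 : ℝ) * θ = ((x : ℝ) + y * θ) ^ m := by
  induction m with
  | zero => simp [PQ]
  | succ m ih =>
    rw [pow_succ, ← ih]
    simp only [PQ]
    push_cast
    linear_combination (-((PQ x y D m).2 : ℝ) * y) * hθ

lemma PQ_spec' (x y D : ℤ) (θ : ℝ) (hθ : θ ^ 2 = (D : ℝ)) (m : ℕ) :
    ((PQ x y D m).1 : ℝ) - ((PQ x y D m).2 : ℝ) * θ = ((x : ℝ) - y * θ) ^ m := by
  have := PQ_spec x y D (-θ) (by rw [neg_pow]; simpa using hθ) m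
  simpa [mul_neg, ← sub_eq_add_neg] using this

lemma PQ_period (x y D : ℤ) (h : x ^ 2 - D * y ^ 2 = 1) (u : ℕ) (hu : 0 < u) :
    ∃ T, 1 ≤ T ∧ (u : ℤ) ∣ (PQ x y D T).2 := by
  haveI : NeZero u := ⟨hu.ne'⟩
  set f : ℕ → ZMod u × ZMod u :=
    fun m => (((PQ x y D m).1 : ZMod u), ((PQ x y D m).2 : ZMod u)) with hf
  set G : ZMod u × ZMod u → ZMod u × ZMod u :=
    fun v => (v.1 * (x : ZMod u) - (D : ZMod u) * (y : ZMod u) * v.2,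
              -(v.1 * (y : ZMod u)) + (x : ZMod u) * v.2) with hG
  have hcast : ((x : ZMod u)) ^ 2 - (D : ZMod u) * (y : ZMod u) ^ 2 = 1 := by
    have := congrArg (fun z : ℤ => (z : ZMod u)) h
    push_cast at this
    exact this
  have key : ∀ m, G (f (m + 1)) = f m := by
    intro m
    simp only [hf, hG, PQ]
    push_cast
    refine Prod.ext ?_ ?_ <;> simp only
    · linear_combination (((PQ x y D m).1 : ZMod u)) * hcast
    · linear_combination (((PQ x y D m).2 : ZMod u)) * hcast
  have back : ∀ k m, G^[k] (f (k + m)) = f m := by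
    intro k
    induction k with
    | zero => intro m; simp
    | succ k ih =>
      intro m
      have : k + 1 + m = (k + m) + 1 := by omega
      rw [this, Function.iterate_succ_apply, key, ih]
  obtain ⟨i, j, hij, hfij⟩ := Finite.exists_ne_map_eq_of_infinite f
  wlog hlt : i < j generalizing i j
  · exact this j i hij.symm hfij.symm (by omega)
  refine ⟨j - i, by omega, ?_⟩
  have h1 : G^[i] (f (i + 0)) = f 0 := back i 0
  have h2 : G^[i] (f (i + (j - i))) = f (j - i) := back i (j - i)
  rw [show i + (j - i) = j by omega] at h2
  rw [← hfij] at h2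
  rw [add_zero] at h1
  have h3 : f (j - i) = f 0 := by rw [← h2, h1]
  have h4 : ((PQ x y D (j - i)).2 : ZMod u) = 0 := by
    have := congrArg Prod.snd h3
    simpa [hf, PQ] using this
  exact (ZMod.intCast_zmod_eq_zero_iff_dvd _ u).mp h4

lemma abs_sub_round_le_abs_sub_int (z : ℝ) (k : ℤ) : |z - round z| ≤ |z - k| := by
  by_cases h : round z = k
  · rw [h]
  · have h1 : |z - round z| ≤ 1 / 2 := abs_sub_round z
    have h2 : (1 : ℝ) ≤ |(round z : ℝ) - k| := by
      have : (1 : ℤ) ≤ |round z - k| := Int.one_le_abs (sub_ne_zero.mpr h)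
      calc (1:ℝ) = ((1:ℤ):ℝ) := by norm_num
        _ ≤ ((|round z - k| : ℤ) : ℝ) := by exact_mod_cast this
        _ = |(round z : ℝ) - k| := by push_cast; rfl
    have h3 : |(round z : ℝ) - k| ≤ |z - round z| + |z - k| := by
      calc |(round z : ℝ) - k| = |(z - k) - (z - round z)| := by ring_nf
        _ ≤ |z - k| + |z - round z| := abs_sub _ _
        _ = |z - round z| + |z - k| := by ring
    linarith

lemma pseudoAbs_nonneg (u : ℕ → ℕ) (q : ℕ) : 0 ≤ pseudoAbs u q := by
  apply Real.sInf_nonneg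
  rintro w ⟨k, -, -, rfl⟩
  positivity

lemma pseudoAbs_le (u : ℕ → ℕ) (q : ℕ) (n : ℕ) (hn : 1 ≤ n) (h : u n ∣ q) :
    pseudoAbs u q ≤ 1 / (u n : ℝ) := by
  apply csInf_le
  · exact ⟨0, by rintro w ⟨k, -, -, rfl⟩; positivity⟩
  · exact ⟨n, hn, h, rfl⟩

lemma exists_small_element (α : ℝ) (hα : IsQuadraticIrrational α)
    (u : ℕ → ℕ) (hu1 : u 1 = 1)
    (hinc : ∀ n, 1 ≤ n → u n < u (n + 1))
    (ε : ℝ) (hε : 0 < ε) :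
    ∃ q : ℕ, 1 ≤ q ∧ (q : ℝ) * distNearestInt ((q : ℝ) * α) * pseudoAbs u q < ε := by
  obtain ⟨hirr, a, b, c, ha, habc⟩ := hα
  set D : ℤ := b ^ 2 - 4 * a * c with hD
  set θ : ℝ := 2 * a * α + b with hθdef
  have hθ2 : θ ^ 2 = (D : ℝ) := by
    simp only [hθdef, hD]
    push_cast
    linear_combination (4 * (a : ℝ)) * habc
  have hθirr : Irrational θ := by
    have h2a : (2 * a : ℤ) ≠ 0 := by omega
    have := (Irrational.intCast_mul hirr h2a).add_intCast b
    convert this using 1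
    push_cast
    ring
  have hθne : θ ≠ 0 := by
    intro h
    exact (hθirr.ne_int 0) (by simpa using h)
  have hD0 : 0 < D := by
    have h1 : (0 : ℝ) < θ ^ 2 := (sq_nonneg θ).lt_of_ne (Ne.symm (pow_ne_zero 2 hθne))
    rw [hθ2] at h1
    exact_mod_cast h1
  have hDns : ¬ IsSquare D := by
    rintro ⟨r, hr⟩
    have h1 : (θ - r) * (θ + r) = 0 := by
      have : (D : ℝ) = (r : ℝ) * r := by exact_mod_cast congrArg (fun z : ℤ => (z : ℝ)) hr
      linear_combination hθ2 + this
    rcases mul_eq_zero.mp h1 with h2 | h2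
    · exact hθirr.ne_int r (by linarith)
    · exact hθirr.ne_int (-r) (by push_cast; linarith)
  clear_value D
  obtain ⟨x0, y0, hpell0, hy0⟩ := Pell.exists_of_not_isSquare hD0 hDns
  have hy0r : ((y0 : ℝ)) * θ ≠ 0 := by
    apply mul_ne_zero _ hθne
    exact_mod_cast hy0
  set x : ℤ := |x0| with hx
  set y : ℤ := if 0 < (y0 : ℝ) * θ then y0 else -y0 with hy
  have hpell : x ^ 2 - D * y ^ 2 = 1 := by
    rw [hx, hy]
    rcases ite_eq_or_eq (0 < (y0 : ℝ) * θ) y0 (-y0) with h | h <;> rw [h] <;>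
      simp [sq_abs] <;> linarith [hpell0]
  have hx1 : 1 ≤ x := by
    rw [hx]
    rcases eq_or_ne x0 0 with h | h
    · exfalso; rw [h] at hpell0; nlinarith [sq_nonneg y0, hD0]
    · exact Int.one_le_abs h
  have hyθ : 0 < (y : ℝ) * θ := by
    rw [hy]
    by_cases h : 0 < (y0 : ℝ) * θ
    · simpa [h] using h
    · simp only [h, if_false]
      push_cast
      rcases lt_or_gt_of_ne hy0r with h2 | h2
      · nlinarith
      · exact absurd h2 h
  clear_value x y
  set lam : ℝ := x + y * θ with hlam
  set mu : ℝ := x - y * θ with hmu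
  have hxr : (1 : ℝ) ≤ (x : ℝ) := by exact_mod_cast hx1
  have hlam1 : 1 < lam := by rw [hlam]; linarith
  have hlammu : lam * mu = 1 := by
    have hp : ((x : ℝ)) ^ 2 - (D : ℝ) * (y : ℝ) ^ 2 = 1 := by exact_mod_cast hpell
    rw [hlam, hmu]
    linear_combination hp - (y : ℝ) ^ 2 * hθ2
  have hmu0 : 0 < mu := by nlinarith
  have hmu1 : mu < 1 := by nlinarith
  clear_value lam mu
  -- choose n
  have hθa : 0 < |θ| := abs_pos.mpr hθne
  set B : ℝ := |(a : ℝ)| / (|θ| * ε) with hB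
  set n : ℕ := ⌊B⌋₊ + 1 with hn
  have hn1 : 1 ≤ n := by omega
  have humono : ∀ m, 1 ≤ m → m ≤ u m := by
    intro m hm
    induction m with
    | zero => omega
    | succ k ih =>
      rcases Nat.eq_zero_or_pos k with h | h
      · simp [h, hu1]
      · have h1 := hinc k h
        have h2 := ih h
        omega
  have hun : n ≤ u n := humono n hn1
  have hupos : 0 < u n := by omega
  have huposr : (0 : ℝ) < (u n : ℝ) := by exact_mod_cast hupos
  have hBn : B < (u n : ℝ) := by
    calc B < (⌊B⌋₊ : ℝ) + 1 := Nat.lt_floor_add_one B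
      _ = ((n : ℕ) : ℝ) := by rw [hn]; push_cast; ring
      _ ≤ (u n : ℝ) := by exact_mod_cast hun
  have htarget : |(a : ℝ)| / (|θ| * (u n : ℝ)) < ε := by
    rw [div_lt_iff₀ (by positivity)]
    rw [hB, div_lt_iff₀ (by positivity)] at hBn
    nlinarith
  clear_value B n
  -- get period
  obtain ⟨T, hT1, hdvdQ⟩ := PQ_period x y D hpell (u n) hupos
  set P : ℤ := (PQ x y D T).1 with hP
  set Q : ℤ := (PQ x y D T).2 with hQ
  have hspec1 : (P : ℝ) + (Q : ℝ) * θ = lam ^ T := by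
    rw [hlam]; exact PQ_spec x y D θ hθ2 T
  have hspec2 : (P : ℝ) - (Q : ℝ) * θ = mu ^ T := by
    rw [hmu]; exact PQ_spec' x y D θ hθ2 T
  have hlamT : 1 < lam ^ T := one_lt_pow₀ hlam1 (by omega)
  have hmuT0 : 0 < mu ^ T := pow_pos hmu0 T
  have hmuT1 : mu ^ T < 1 := pow_lt_one₀ hmu0.le hmu1 (by omega)
  clear_value P Q
  have hQθ : (Q : ℝ) * θ = (lam ^ T - mu ^ T) / 2 := by
    linear_combination (hspec1 - hspec2) / 2
  have hQθpos : 0 < (Q : ℝ) * θ := by rw [hQθ]; linarith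
  have hQne : Q ≠ 0 := by
    intro h
    rw [h] at hQθpos
    simp at hQθpos
  set cInt : ℤ := 2 * a * Q with hc
  have hcne : cInt ≠ 0 := by
    rw [hc]
    exact mul_ne_zero (mul_ne_zero two_ne_zero ha) hQne
  set q : ℕ := cInt.natAbs with hqdef
  have hq1 : 1 ≤ q := Int.natAbs_pos.mpr hcne
  have hqcast : (q : ℝ) = |(cInt : ℝ)| := by
    rw [hqdef, Nat.cast_natAbs, Int.cast_abs]
  clear_value cInt q
  have hkey : (cInt : ℝ) * α - ((P - b * Q : ℤ) : ℝ) = -(mu ^ T) := by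
    push_cast [hc]
    linear_combination (-(Q : ℝ)) * hθdef - hspec2
  have hudvd : u n ∣ q := by
    have h1 : ((u n : ℤ)) ∣ cInt := by
      rw [hc]; exact Dvd.dvd.mul_left hdvdQ (2 * a)
    have h2 := Int.natAbs_dvd_natAbs.mpr h1
    rw [hqdef]
    simpa using h2
  -- bound on distance
  have hdist : distNearestInt ((q : ℝ) * α) ≤ mu ^ T := by
    rcases abs_cases ((cInt : ℝ)) with ⟨h1, h2⟩ | ⟨h1, h2⟩
    · have hqc : (q : ℝ) = (cInt : ℝ) := by rw [hqcast, h1]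
      calc distNearestInt ((q : ℝ) * α)
          ≤ |(q : ℝ) * α - ((P - b * Q : ℤ) : ℝ)| :=
            abs_sub_round_le_abs_sub_int _ _
        _ = |-(mu ^ T)| := by rw [hqc, hkey]
        _ = mu ^ T := by rw [abs_neg, abs_of_pos hmuT0]
    · have hqc : (q : ℝ) = -(cInt : ℝ) := by rw [hqcast, h1]
      calc distNearestInt ((q : ℝ) * α)
          ≤ |(q : ℝ) * α - ((-(P - b * Q) : ℤ) : ℝ)| :=
            abs_sub_round_le_abs_sub_int _ _
        _ = |-((cInt : ℝ) * α - ((P - b * Q : ℤ) : ℝ))| := by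
            rw [hqc]; push_cast; ring_nf
        _ = |(cInt : ℝ) * α - ((P - b * Q : ℤ) : ℝ)| := abs_neg _
        _ = mu ^ T := by rw [hkey, abs_neg, abs_of_pos hmuT0]
  -- bound on q
  have hqbound : (q : ℝ) ≤ |(a : ℝ)| * lam ^ T / |θ| := by
    rw [le_div_iff₀ hθa, hqcast]
    have h1 : |(cInt : ℝ)| * |θ| = |(cInt : ℝ) * θ| := (abs_mul _ _).symm
    rw [h1]
    have h2 : (cInt : ℝ) * θ = 2 * (a : ℝ) * ((Q : ℝ) * θ) := by
      push_cast [hc]; ring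
    rw [h2, abs_mul, abs_of_pos hQθpos]
    have h3 : |2 * (a : ℝ)| = 2 * |(a : ℝ)| := by
      rw [abs_mul]; norm_num
    rw [h3, hQθ]
    have h4 : 0 ≤ |(a : ℝ)| * mu ^ T := mul_nonneg (abs_nonneg _) hmuT0.le
    linarith
  have hpa := pseudoAbs_le u q n hn1 hudvd
  have hpa0 := pseudoAbs_nonneg u q
  have hdist0 : 0 ≤ distNearestInt ((q : ℝ) * α) := abs_nonneg _
  have hq0 : (0 : ℝ) ≤ (q : ℝ) := Nat.cast_nonneg q
  refine ⟨q, hq1, ?_⟩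
  have hfin : (q : ℝ) * distNearestInt ((q : ℝ) * α) * pseudoAbs u q
      ≤ (|(a : ℝ)| * lam ^ T / |θ|) * (mu ^ T) * (1 / (u n : ℝ)) := by
    apply mul_le_mul _ hpa hpa0 (by positivity)
    exact mul_le_mul hqbound hdist hdist0 (by positivity)
  have heq : (|(a : ℝ)| * lam ^ T / |θ|) * (mu ^ T) * (1 / (u n : ℝ))
      = |(a : ℝ)| * (lam ^ T * mu ^ T) / (|θ| * (u n : ℝ)) := by ring
  have hlm : lam ^ T * mu ^ T = 1 := by rw [← mul_pow, hlammu, one_pow]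
  rw [heq, hlm, mul_one] at hfin
  exact lt_of_le_of_lt hfin htarget


/-- The Mixed Littlewood Conjecture holds for every quadratic irrational `α`
and every pseudo-absolute value sequence `D`:
`inf_{q ≥ 1} q · ‖qα‖ · |q|_D = 0`. -/
theorem mixed_littlewood_quadratic (α : ℝ) (hα : IsQuadraticIrrational α)
    (u : ℕ → ℕ) (hu1 : u 1 = 1)
    (hinc : ∀ n, 1 ≤ n → u n < u (n + 1))
    (hdvd : ∀ n, 1 ≤ n → u n ∣ u (n + 1)) :
    sInf {x : ℝ | ∃ q : ℕ, 1 ≤ q ∧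
        x = (q : ℝ) * distNearestInt ((q : ℝ) * α) * pseudoAbs u q} = 0 := by
  set S : Set ℝ := {x : ℝ | ∃ q : ℕ, 1 ≤ q ∧
      x = (q : ℝ) * distNearestInt ((q : ℝ) * α) * pseudoAbs u q} with hS
  have hSnonneg : ∀ z ∈ S, 0 ≤ z := by
    rintro z ⟨q, hq, rfl⟩
    have h1 : 0 ≤ distNearestInt ((q : ℝ) * α) := abs_nonneg _
    have h2 := pseudoAbs_nonneg u q
    positivity
  have hlow : 0 ≤ sInf S := Real.sInf_nonneg hSnonneg
  refine le_antisymm ?_ hlow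
  by_contra h
  push_neg at h
  obtain ⟨q, hq1, hqlt⟩ := exists_small_element α hα u hu1 hinc (sInf S) h
  have hmem : (q : ℝ) * distNearestInt ((q : ℝ) * α) * pseudoAbs u q ∈ S := ⟨q, hq1, rfl⟩
  have := csInf_le ⟨0, hSnonneg⟩ hmem
  linarith
end

section
/- The integral over (0,1) of −log(x)/(log(2)·(1+x)) with respect to Lebesgue measure equals π²/(12·log 2); equivalently, ∫₀¹ log(x)/(1+x) dx = −π²/12. -/
set_option maxHeartbeats 1000000

open Real MeasureTheory intervalIntegral Set Finset

-- integrability of anything bounded by |log| on (0,1]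
lemma aux_log_bound {x : ℝ} (h0 : 0 < x) (h1 : x ≤ 1) :
    |Real.log x| ≤ 2 * x ^ (-(1:ℝ)/2) := by
  rw [abs_of_nonpos (Real.log_nonpos h0.le h1)]
  have h2 : Real.log (x ^ (-(1:ℝ)/2)) ≤ x ^ (-(1:ℝ)/2) - 1 :=
    Real.log_le_sub_one_of_pos (Real.rpow_pos_of_pos h0 _)
  rw [Real.log_rpow h0] at h2
  nlinarith [Real.rpow_pos_of_pos h0 (-(1:ℝ)/2)]

lemma aux_integrable {f : ℝ → ℝ} (hm : Measurable f)
    (hb : ∀ x, 0 < x → x ≤ 1 → |f x| ≤ |Real.log x|) :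
    IntervalIntegrable f volume 0 1 := by
  have hg : IntervalIntegrable (fun x : ℝ => 2 * x ^ (-(1:ℝ)/2)) volume 0 1 :=
    (intervalIntegral.intervalIntegrable_rpow' (by norm_num)).const_mul 2
  apply hg.mono_fun' hm.aestronglyMeasurable
  rw [Set.uIoc_of_le (by norm_num : (0:ℝ) ≤ 1)]
  refine (MeasureTheory.ae_restrict_iff' measurableSet_Ioc).2 (Filter.Eventually.of_forall ?_)
  intro x hx
  calc ‖f x‖ = |f x| := rfl
    _ ≤ |Real.log x| := hb x hx.1 hx.2
    _ ≤ 2 * x ^ (-(1:ℝ)/2) := aux_log_bound hx.1 hx.2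

lemma aux_int_pow_log (n : ℕ) :
    IntervalIntegrable (fun x : ℝ => x ^ n * Real.log x) volume 0 1 := by
  apply aux_integrable (f := fun x : ℝ => x ^ n * Real.log x) ((measurable_id.pow_const n).mul Real.measurable_log)
  intro x h0 h1
  rw [abs_mul, abs_of_nonneg (pow_nonneg h0.le n)]
  calc x ^ n * |Real.log x| ≤ 1 * |Real.log x| := by
        gcongr
        exact pow_le_one₀ h0.le h1
    _ = |Real.log x| := one_mul _

lemma aux_integral_pow_log (n : ℕ) :
    ∫ x in (0:ℝ)..1, x ^ n * Real.log x = -(1 / ((n : ℝ) + 1) ^ 2) := by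
  set c : ℝ := (n : ℝ) + 1 with hc
  have hc0 : c ≠ 0 := by positivity
  set F : ℝ → ℝ := fun x => x ^ (n + 1) * Real.log x / c - x ^ (n + 1) / c ^ 2 with hF
  have hcont : Continuous F := by
    have h1 : Continuous fun x : ℝ => x ^ n * (x * Real.log x) :=
      (continuous_pow n).mul Real.continuous_mul_log
    have : F = fun x => x ^ n * (x * Real.log x) / c - x ^ (n + 1) / c ^ 2 := by
      funext x; simp only [hF]; ring
    rw [this]
    exact (h1.div_const c).sub ((continuous_pow (n + 1)).div_const (c ^ 2))
  have hder : ∀ x ∈ Set.Ioo (0:ℝ) 1, HasDerivAt F (x ^ n * Real.log x) x := by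
    intro x hx
    have hx0 : x ≠ 0 := ne_of_gt hx.1
    have h1 : HasDerivAt (fun y : ℝ => y ^ (n + 1)) (((n : ℝ) + 1) * x ^ n) x := by
      simpa using hasDerivAt_pow (n + 1) x
    have h2 : HasDerivAt Real.log x⁻¹ x := Real.hasDerivAt_log hx0
    have h3 := ((h1.mul h2).div_const c).sub (h1.div_const (c ^ 2))
    refine h3.congr_deriv ?_
    field_simp
    ring
  have := intervalIntegral.integral_eq_sub_of_hasDerivAt_of_le (by norm_num : (0:ℝ) ≤ 1)
    hcont.continuousOn hder (aux_int_pow_log n)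
  rw [this]
  simp only [hF, one_pow, Real.log_one, Real.log_zero, zero_pow (Nat.succ_ne_zero n)]
  field_simp
  ring

lemma aux_hasSum_alt :
    HasSum (fun n : ℕ => (-1 : ℝ) ^ (n + 1) / ((n : ℝ) + 1) ^ 2) (-(π ^ 2) / 12) := by
  have hz := hasSum_zeta_two
  -- even-index subsum
  set e : ℕ → ℝ := fun n => if Even n then (1 : ℝ) / (n : ℝ) ^ 2 else 0 with he
  have he2 : HasSum (fun k : ℕ => (1 : ℝ) / ((2 * k : ℕ) : ℝ) ^ 2) (π ^ 2 / 6 / 4) := by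
    have := hz.div_const 4
    convert this using 2 with k
    · rfl
    push_cast
    rcases eq_or_ne (k : ℝ) 0 with h | h
    · simp [h]
    · field_simp; ring
  have hinj : Function.Injective (fun k : ℕ => 2 * k) := fun a b h => by dsimp at h; omega
  have hesum : HasSum e (π ^ 2 / 6 / 4) := by
    rw [← hinj.hasSum_iff (by
      intro x hx
      simp only [he]
      rw [if_neg]
      rintro ⟨k, hk⟩
      exact hx ⟨k, by dsimp; omega⟩)]
    convert he2 using 1
    funext k
    simp [he, even_two_mul]
  have hh : HasSum (fun n : ℕ => (-1 : ℝ) ^ n / (n : ℝ) ^ 2) (2 * (π ^ 2 / 6 / 4) - π ^ 2 / 6) := by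
    have := (hesum.mul_left 2).sub hz
    convert this using 1
    · rfl
    funext n
    rcases Nat.even_or_odd n with h | h
    · simp [he, h, Even.neg_one_pow h]; ring
    · simp [he, Nat.not_even_iff_odd.2 h, Odd.neg_one_pow h]; ring
  have hshift : HasSum (fun n : ℕ => (-1 : ℝ) ^ (n + 1) / ((n : ℝ) + 1) ^ 2)
      (2 * (π ^ 2 / 6 / 4) - π ^ 2 / 6) := by
    have := (hasSum_nat_add_iff (f := fun n : ℕ => (-1 : ℝ) ^ n / (n : ℝ) ^ 2) 1).2 (by
      simpa using hh)
    convert this using 2 with n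
    · rfl
    push_cast
    ring_nf
  convert hshift using 1
  ring

lemma aux_main : (∫ x in (0:ℝ)..1, Real.log x / (1 + x)) = -(Real.pi ^ 2) / 12 := by
  set I : ℝ := ∫ x in (0:ℝ)..1, Real.log x / (1 + x) with hI
  have hint_main : IntervalIntegrable (fun x : ℝ => Real.log x / (1 + x)) volume 0 1 := by
    apply aux_integrable (f := fun x : ℝ => Real.log x / (1 + x)) (Real.measurable_log.div (measurable_const.add measurable_id))
    intro x h0 h1
    rw [abs_div, abs_of_pos (by linarith : (0:ℝ) < 1 + x)]
    calc |Real.log x| / (1 + x) ≤ |Real.log x| / 1 := by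
          apply div_le_div_of_nonneg_left (abs_nonneg _) one_pos; linarith
      _ = |Real.log x| := div_one _
  set S : ℕ → ℝ := fun N => ∑ n ∈ Finset.range N, (-1 : ℝ) ^ (n + 1) / ((n : ℝ) + 1) ^ 2 with hS
  have key : ∀ N : ℕ, I - S N = ∫ x in (0:ℝ)..1, (-x) ^ N * (Real.log x / (1 + x)) := by
    intro N
    have hsum_int : IntervalIntegrable
        (fun x : ℝ => ∑ n ∈ Finset.range N, (-1 : ℝ) ^ n * (x ^ n * Real.log x)) volume 0 1 := by
      have h := IntervalIntegrable.sum (μ := volume) (a := (0:ℝ)) (b := 1) (Finset.range N)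
        (f := fun n (x : ℝ) => (-1 : ℝ) ^ n * (x ^ n * Real.log x))
        (fun n _ => (aux_int_pow_log n).const_mul _)
      convert h using 1
      · rfl
      funext x
      simp [Finset.sum_apply]
    have h1 : (∫ x in (0:ℝ)..1, (Real.log x / (1 + x)
        - ∑ n ∈ Finset.range N, (-1 : ℝ) ^ n * (x ^ n * Real.log x)))
        = I - S N := by
      rw [intervalIntegral.integral_sub hint_main hsum_int,
        intervalIntegral.integral_finset_sum (fun n _ => (aux_int_pow_log n).const_mul _)]
      congr 1
      rw [hS]
      apply Finset.sum_congr rfl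
      intro n _
      rw [intervalIntegral.integral_const_mul, aux_integral_pow_log n]
      ring
    rw [← h1]
    apply intervalIntegral.integral_congr
    intro x hx
    dsimp only
    rw [Set.uIcc_of_le (by norm_num : (0:ℝ) ≤ 1)] at hx
    have hx1 : (1 : ℝ) + x ≠ 0 := by have := hx.1; intro h; linarith
    have hgeom : ∑ n ∈ Finset.range N, (-x) ^ n = (1 - (-x) ^ N) / (1 + x) := by
      rw [geom_sum_eq (by intro h; rw [← h] at hx; have := hx.1; linarith : (-x) ≠ 1)]
      rw [show (-x) - 1 = -(1 + x) by ring, div_neg, neg_div', neg_sub]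
    have : ∑ n ∈ Finset.range N, (-1 : ℝ) ^ n * (x ^ n * Real.log x)
        = ((1 - (-x) ^ N) / (1 + x)) * Real.log x := by
      rw [← hgeom, Finset.sum_mul]
      apply Finset.sum_congr rfl
      intro n _
      rw [neg_pow]
      ring
    rw [this]
    field_simp
    ring
  have hbound : ∀ N : ℕ, ‖I - S N‖ ≤ 1 / ((N : ℝ) + 1) ^ 2 := by
    intro N
    rw [key N, Real.norm_eq_abs]
    have habs : |∫ x in (0:ℝ)..1, (-x) ^ N * (Real.log x / (1 + x))|
        ≤ ∫ x in (0:ℝ)..1, |(-x) ^ N * (Real.log x / (1 + x))| :=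
      intervalIntegral.abs_integral_le_integral_abs (by norm_num)
    have hg_int : IntervalIntegrable (fun x : ℝ => (-x) ^ N * (Real.log x / (1 + x)))
        volume 0 1 := by
      apply aux_integrable (f := fun x : ℝ => (-x) ^ N * (Real.log x / (1 + x))) ((measurable_id.neg.pow_const N).mul (Real.measurable_log.div (measurable_const.add measurable_id)))
      intro x h0 h1
      rw [abs_mul, abs_pow, abs_neg, abs_of_pos h0, abs_div,
        abs_of_pos (by linarith : (0:ℝ) < 1 + x)]
      calc x ^ N * (|Real.log x| / (1 + x)) ≤ 1 * (|Real.log x| / 1) := by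
            apply mul_le_mul (pow_le_one₀ h0.le h1)
            · apply div_le_div_of_nonneg_left (abs_nonneg _) one_pos; linarith
            · positivity
            · norm_num
        _ = |Real.log x| := by rw [one_mul, div_one]
    have hb_int : IntervalIntegrable (fun x : ℝ => x ^ N * (-Real.log x)) volume 0 1 := by
      have := (aux_int_pow_log N).neg
      convert this using 1
      funext x; rw [Pi.neg_apply]; ring
    have hmono : (∫ x in (0:ℝ)..1, |(-x) ^ N * (Real.log x / (1 + x))|)
        ≤ ∫ x in (0:ℝ)..1, x ^ N * (-Real.log x) := by
      apply intervalIntegral.integral_mono_on (by norm_num) hg_int.abs hb_int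
      intro x hx
      rcases eq_or_lt_of_le hx.1 with h | h
      · simp [← h]
      · rw [abs_mul, abs_pow, abs_neg, abs_of_pos h, abs_div,
          abs_of_pos (by linarith [hx.2] : (0:ℝ) < 1 + x),
          abs_of_nonpos (Real.log_nonpos h.le hx.2)]
        have hl : 0 ≤ -Real.log x := neg_nonneg.2 (Real.log_nonpos h.le hx.2)
        have h2 : -Real.log x / (1 + x) ≤ -Real.log x := by
          rw [div_le_iff₀ (by linarith [hx.2] : (0:ℝ) < 1 + x)]
          nlinarith
        exact mul_le_mul_of_nonneg_left h2 (pow_nonneg h.le N)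
    have hval : (∫ x in (0:ℝ)..1, x ^ N * (-Real.log x)) = 1 / ((N : ℝ) + 1) ^ 2 := by
      have : (fun x : ℝ => x ^ N * (-Real.log x)) = fun x => -(x ^ N * Real.log x) := by
        funext x; ring
      rw [this, intervalIntegral.integral_neg, aux_integral_pow_log N, neg_neg]
    linarith [habs.trans hmono]
  have htend0 : Filter.Tendsto (fun N : ℕ => I - S N) Filter.atTop (nhds 0) := by
    apply squeeze_zero_norm hbound
    have h1 : Filter.Tendsto (fun N : ℕ => 1 / ((N : ℝ) + 1)) Filter.atTop (nhds 0) :=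
      tendsto_one_div_add_atTop_nhds_zero_nat
    have := h1.mul h1
    rw [mul_zero] at this
    convert this using 2 with N
    rw [div_mul_div_comm, one_mul]
    ring_nf
  have htendS : Filter.Tendsto S Filter.atTop (nhds I) := by
    have := Filter.Tendsto.sub (tendsto_const_nhds (x := I)) htend0
    rw [sub_zero] at this
    convert this using 2 with N
    ring
  exact tendsto_nhds_unique htendS aux_hasSum_alt.tendsto_sum_nat

/-- The Gauss–Kuzmin integral of `-log x` equals Lévy's constant
`γ = π²/(12 log 2)`; equivalently `∫₀¹ log x/(1+x) dx = -π²/12`. -/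
theorem gauss_kuzmin_integral_log :
    (∫ x in (0 : ℝ)..1, -Real.log x / (Real.log 2 * (1 + x))) =
      Real.pi ^ 2 / (12 * Real.log 2) ∧
    (∫ x in (0 : ℝ)..1, Real.log x / (1 + x)) = -(Real.pi ^ 2) / 12 := by
  refine ⟨?_, aux_main⟩
  have hL : Real.log 2 ≠ 0 := ne_of_gt (Real.log_pos one_lt_two)
  have h1 : (∫ x in (0 : ℝ)..1, -Real.log x / (Real.log 2 * (1 + x)))
      = ∫ x in (0 : ℝ)..1, (Real.log 2)⁻¹ * -(Real.log x / (1 + x)) := by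
    congr 1
    funext x
    rw [div_mul_eq_div_div_swap, neg_div, neg_div, div_eq_inv_mul, mul_neg]
  rw [h1, intervalIntegral.integral_const_mul, intervalIntegral.integral_neg, aux_main]
  field_simp
end
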